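/- Let m ≥ 1, 1 ≤ p_j < ∞ for j = 1,…,m, 1/p = Σ_{j=1}^m 1/p_j, and ω⃗ = (ω₁,…,ω_m) ∈ A_{p⃗}^∞(φ) with ν_{ω⃗} = ∏_{j=1}^m ω_j^{p/p_j}. Then there exists some θ₀ > 0, depending on p, m, p_j, and a constant C > 0 such that ‖𝓜_{φ,θ₀}(f⃗)‖_{L^{p,∞}(ν_{ω⃗})} ≤ C ∏_{j=1}^m ‖f_j‖_{L^{p_j}(ω_j)} for all f⃗. -/

import Mathlib

open MeasureTheory ENNReal Set Filter

noncomputable section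

/-- `ℝⁿ` with the Euclidean norm. -/
abbrev En (n : ℕ) := EuclideanSpace ℝ (Fin n)

/-- The (closed) cube centered at `x` with sidelength `r`. -/
def cube {n : ℕ} (x : En n) (r : ℝ) : Set (En n) :=
  {y | ∀ i, |y i - x i| ≤ r / 2}

/-- Weighted `L^p` norm `(∫ |f|^p w)^{1/p}` (valued in `ℝ≥0∞`). -/
def wLp {n : ℕ} (p : ℝ) (w f : En n → ℝ) : ℝ≥0∞ :=
  (∫⁻ x, ENNReal.ofReal (|f x| ^ p * w x)) ^ (1 / p)

/-- Weighted weak `L^p` norm `sup_{t>0} t · w({|f|>t})^{1/p}`. -/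
def wLpWeak {n : ℕ} (p : ℝ) (w f : En n → ℝ) : ℝ≥0∞ :=
  ⨆ (t : ℝ) (_ : 0 < t), ENNReal.ofReal t *
    (∫⁻ x in {x | t < |f x|}, ENNReal.ofReal (w x)) ^ (1 / p)

/-- The dilated kernel `K_t(x,y⃗) = t^{-mn} K(x/t, y⃗/t)`. -/
def Kt {n m : ℕ} (K : En n → (Fin m → En n) → ℝ) (t : ℝ) (x : En n)
    (y : Fin m → En n) : ℝ :=
  t ^ (-(m * n : ℝ)) * K (t⁻¹ • x) fun j => t⁻¹ • y j

/-- The multilinear square function associated with the kernel `K`. -/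
def sqOp {n m : ℕ} (K : En n → (Fin m → En n) → ℝ) (f : Fin m → En n → ℝ)
    (x : En n) : ℝ :=
  (∫ t in Ioi (0 : ℝ),
      (∫ y : Fin m → En n, Kt K t x y * ∏ j, f j (y j)) ^ 2 / t) ^ (1 / 2 : ℝ)

/-- Size condition (1.2). -/
def SizeCond (n m : ℕ) (K : En n → (Fin m → En n) → ℝ) : Prop :=
  ∀ N : ℝ, 0 ≤ N → ∃ C > 0, ∀ (y0 : En n) (y : Fin m → En n),
    0 < ∑ j, dist y0 (y j) →
    (∫ t in Ioi (0 : ℝ), (Kt K t y0 y) ^ 2 / t) ^ (1 / 2 : ℝ) ≤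
      C * (∑ j, dist y0 (y j)) ^ (-(m * n : ℝ)) *
        (1 + ∑ j, dist y0 (y j)) ^ (-N)

/-- The cube `Δ_k = Q(y₀, 2^k √(mn) |y₀ - y₀'|)`. -/
def deltaCube {n : ℕ} (m : ℕ) (y0 y0' : En n) (k : ℕ) : Set (En n) :=
  cube y0 (2 ^ k * Real.sqrt (m * n) * dist y0 y0')

/-- The "annulus" `(Δ_{k+2})^m \ (Δ_{k+1})^m`. -/
def annulus {n : ℕ} (m : ℕ) (y0 y0' : En n) (k : ℕ) : Set (Fin m → En n) :=
  {y | ∀ j, y j ∈ deltaCube m y0 y0' (k + 2)} \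
    {y | ∀ j, y j ∈ deltaCube m y0 y0' (k + 1)}

/-- Generalized smoothness condition (1.4) with constants `Ck`. -/
def GenSmoothCond (n m : ℕ) (q q' : ℝ) (Ck : ℕ → ℝ)
    (K : En n → (Fin m → En n) → ℝ) : Prop :=
  ∀ N : ℝ, 0 ≤ N → ∃ C > 0, ∀ (k : ℕ) (y0 y0' : En n), y0 ≠ y0' →
    (∫ t in Ioi (0 : ℝ),
        (∫ y in annulus m y0 y0' k, |Kt K t y0 y - Kt K t y0' y| ^ q) ^ (2 / q)
          / t) ^ (1 / 2 : ℝ) ≤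
      C * Ck k * dist y0 y0' ^ (-(m * n / q')) *
        (1 + 2 ^ k * dist y0 y0') ^ (-N) * (2 : ℝ) ^ (-((k : ℝ) * m * n / q'))

/-- Definition 1.1: a new multilinear square operator with generalized kernel. -/
structure IsGenSquareOp (n m : ℕ) (q q' : ℝ) (Ck : ℕ → ℝ)
    (K : En n → (Fin m → En n) → ℝ) : Prop where
  ck_pos : ∀ k, 0 < Ck k
  size : SizeCond n m K
  smooth : GenSmoothCond n m q q' Ck K
  weak_bound : ∃ s : Fin m → ℝ, (∀ j, 1 ≤ s j ∧ s j ≤ q') ∧ ∃ C > 0,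
    ∀ f : Fin m → En n → ℝ, (∀ j, Measurable (f j)) →
      wLpWeak (∑ j, (s j)⁻¹)⁻¹ (fun _ => 1) (sqOp K f) ≤
        ENNReal.ofReal C * ∏ j, wLp (s j) (fun _ => 1) (f j)

/-- The multiple weight `ν_{ω⃗} = ∏ ω_j^{p/p_j}`. -/
def nuW {n m : ℕ} (p : Fin m → ℝ) (w : Fin m → En n → ℝ) (x : En n) : ℝ :=
  ∏ j, w j x ^ ((∑ i, (p i)⁻¹)⁻¹ / p j)

/-- The multiple weight class `A_{p⃗}^θ(φ)`. -/
def MultiApTheta (n m : ℕ) (p : Fin m → ℝ) (θ : ℝ) (w : Fin m → En n → ℝ) : Prop :=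
  (∀ j x, 0 ≤ w j x) ∧ (∀ j, LocallyIntegrable (w j) volume) ∧
  ∃ C > 0, ∀ (x : En n) (r : ℝ), 0 < r →
    ((ENNReal.ofReal ((1 + r) ^ θ) * volume (cube x r))⁻¹ *
        ∫⁻ y in cube x r, ENNReal.ofReal (nuW p w y)) ^ (∑ i, (p i)⁻¹) *
      ∏ j,
        (if p j = 1 then
          (essInf (fun y => ENNReal.ofReal (w j y)) (volume.restrict (cube x r)))⁻¹
        else
          ((ENNReal.ofReal ((1 + r) ^ θ) * volume (cube x r))⁻¹ *
            ∫⁻ y in cube x r,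
              ENNReal.ofReal (w j y) ^ (1 - p j / (p j - 1))) ^ (1 - (p j)⁻¹))
      ≤ ENNReal.ofReal C



/-- The scalar weight class `A_p^θ(φ)` (with the `ess inf` convention at `p = 1`). -/
def ApTheta (n : ℕ) (p θ : ℝ) (w : En n → ℝ) : Prop :=
  (∀ x, 0 ≤ w x) ∧ LocallyIntegrable w volume ∧
  ∃ C > 0, ∀ (x : En n) (r : ℝ), 0 < r →
    if p = 1 then
      (ENNReal.ofReal ((1 + r) ^ θ) * volume (cube x r))⁻¹ *
          (∫⁻ y in cube x r, ENNReal.ofReal (w y)) ≤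
        ENNReal.ofReal C *
          essInf (fun y => ENNReal.ofReal (w y)) (volume.restrict (cube x r))
    else
      ((ENNReal.ofReal ((1 + r) ^ θ) * volume (cube x r))⁻¹ *
          ∫⁻ y in cube x r, ENNReal.ofReal (w y)) ^ (1 / p) *
        ((ENNReal.ofReal ((1 + r) ^ θ) * volume (cube x r))⁻¹ *
          ∫⁻ y in cube x r, ENNReal.ofReal (w y) ^ (-1 / (p - 1))) ^ (1 - 1 / p) ≤
        ENNReal.ofReal C

/-- Dyadic cube of generation `k` indexed by `v ∈ ℤⁿ`; its sidelength is `2^{-k}`. -/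
def dyadicCube (n : ℕ) (k : ℤ) (v : Fin n → ℤ) : Set (En n) :=
  {y | ∀ i, (v i : ℝ) * 2 ^ (-k) ≤ y i ∧ y i < ((v i : ℝ) + 1) * 2 ^ (-k)}

/-- Average of `f` on `Q`. -/
def cubeAvg {n : ℕ} (Q : Set (En n)) (f : En n → ℝ) : ℝ :=
  (volume Q).toReal⁻¹ * ∫ y in Q, f y

/-- The dyadic maximal function `M^△_{φ,η}`. -/
def dyadicMax (n : ℕ) (η : ℝ) (f : En n → ℝ) (x : En n) : ℝ≥0∞ :=
  ⨆ (k : ℤ) (v : Fin n → ℤ) (_ : x ∈ dyadicCube n k v),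
    (ENNReal.ofReal ((1 + (2 : ℝ) ^ (-k)) ^ η) * volume (dyadicCube n k v))⁻¹ *
      ∫⁻ y in dyadicCube n k v, ENNReal.ofReal |f y|

/-- The dyadic sharp maximal function `M^{♯,△}_{φ,η}`. -/
def sharpMax (n : ℕ) (η : ℝ) (f : En n → ℝ) (x : En n) : ℝ≥0∞ :=
  (⨆ (k : ℤ) (v : Fin n → ℤ) (_ : x ∈ dyadicCube n k v) (_ : (2 : ℝ) ^ (-k) < 1),
      (volume (dyadicCube n k v))⁻¹ *
        ∫⁻ y in dyadicCube n k v,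
          ENNReal.ofReal |f y - cubeAvg (dyadicCube n k v) f|) +
  ⨆ (k : ℤ) (v : Fin n → ℤ) (_ : x ∈ dyadicCube n k v) (_ : 1 ≤ (2 : ℝ) ^ (-k)),
    (ENNReal.ofReal ((1 + (2 : ℝ) ^ (-k)) ^ η) * volume (dyadicCube n k v))⁻¹ *
      ∫⁻ y in dyadicCube n k v, ENNReal.ofReal |f y|

def dyadicMaxDelta (n : ℕ) (δ η : ℝ) (f : En n → ℝ) (x : En n) : ℝ≥0∞ :=
  (dyadicMax n η (fun y => |f y| ^ δ) x) ^ (1 / δ)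

def sharpMaxDelta (n : ℕ) (δ η : ℝ) (f : En n → ℝ) (x : En n) : ℝ≥0∞ :=
  (sharpMax n η (fun y => |f y| ^ δ) x) ^ (1 / δ)

/-- The multilinear maximal operator `𝓜_{φ,η}`. -/
def multiMax (n m : ℕ) (η : ℝ) (f : Fin m → En n → ℝ) (x : En n) : ℝ≥0∞ :=
  ⨆ (c : En n) (r : ℝ) (_ : 0 < r) (_ : x ∈ cube c r),
    ∏ j, (ENNReal.ofReal ((1 + r) ^ η) * volume (cube c r))⁻¹ *
      ∫⁻ y in cube c r, ENNReal.ofReal |f j y|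

def multiMaxDelta (n m : ℕ) (δ η : ℝ) (f : Fin m → En n → ℝ) (x : En n) : ℝ≥0∞ :=
  (multiMax n m η (fun j y => |f j y| ^ δ) x) ^ (1 / δ)

/-- `L^l` "norm" (in `z`) of an `ℝ≥0∞`-valued function, allowing `l = ∞`. -/
def lpFull (n : ℕ) (l : ℝ≥0∞) (g : En n → ℝ≥0∞) : ℝ≥0∞ :=
  if l = ∞ then essSup g volume
  else (∫⁻ z, g z ^ l.toReal) ^ (1 / l.toReal)

/-- Weighted `L^p` norm of `f` restricted to `Q`, i.e. `‖f χ_Q‖_{L^p(w)}`. -/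
def wLpOn {n : ℕ} (Q : Set (En n)) (p : ℝ) (w f : En n → ℝ) : ℝ≥0∞ :=
  (∫⁻ x in Q, ENNReal.ofReal (|f x| ^ p * w x)) ^ (1 / p)

/-- Weighted weak `L^p` norm of `f χ_Q`. -/
def wLpWeakOn {n : ℕ} (Q : Set (En n)) (p : ℝ) (w f : En n → ℝ) : ℝ≥0∞ :=
  ⨆ (t : ℝ) (_ : 0 < t), ENNReal.ofReal t *
    (∫⁻ x in Q ∩ {x | t < |f x|}, ENNReal.ofReal (w x)) ^ (1 / p)

/-- `u(Q) = ∫_Q u`. -/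
def wInt {n : ℕ} (Q : Set (En n)) (u : En n → ℝ) : ℝ≥0∞ :=
  ∫⁻ x in Q, ENNReal.ofReal (u x)

/-- The strong Morrey norm `‖f‖_{M^{p,l}_{α,λ}(u,w)}`. -/
def morreyNorm (n : ℕ) (α lam p : ℝ) (l : ℝ≥0∞) (u w f : En n → ℝ) : ℝ≥0∞ :=
  ⨆ (r : ℝ) (_ : 0 < r), lpFull n l fun z =>
    ENNReal.ofReal ((1 + r) ^ α) * (wInt (cube z r) u) ^ (-lam) *
      wLpOn (cube z r) p w f

/-- The weak Morrey norm `‖f‖_{WM^{p,l}_{α,λ}(u,w)}`. -/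
def weakMorreyNorm (n : ℕ) (α lam p : ℝ) (l : ℝ≥0∞) (u w f : En n → ℝ) : ℝ≥0∞ :=
  ⨆ (r : ℝ) (_ : 0 < r), lpFull n l fun z =>
    ENNReal.ofReal ((1 + r) ^ α) * (wInt (cube z r) u) ^ (-lam) *
      wLpWeakOn (cube z r) p w f

/-- The vector-valued Morrey norm `‖f⃗‖_{M^{p⃗,l}_{α,λ}(u,w⃗)}`. -/
def vecMorreyNorm (n m : ℕ) (α lam : ℝ) (p : Fin m → ℝ) (l : ℝ≥0∞)
    (u : En n → ℝ) (w : Fin m → En n → ℝ) (f : Fin m → En n → ℝ) : ℝ≥0∞ :=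
  ⨆ (r : ℝ) (_ : 0 < r), lpFull n l fun z =>
    ENNReal.ofReal ((1 + r) ^ α) * (wInt (cube z r) u) ^ (-lam) *
      ∏ j, wLpOn (cube z r) (p j) (w j) (f j)

/-- Weighted `L^p` norm of an `ℝ≥0∞`-valued function. -/
def wLpE (n : ℕ) (p : ℝ) (w : En n → ℝ) (g : En n → ℝ≥0∞) : ℝ≥0∞ :=
  (∫⁻ x, g x ^ p * ENNReal.ofReal (w x)) ^ (1 / p)

/-- Weighted weak `L^p` norm of an `ℝ≥0∞`-valued function. -/
def wLpWeakE (n : ℕ) (p : ℝ) (w : En n → ℝ) (g : En n → ℝ≥0∞) : ℝ≥0∞ :=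
  ⨆ (t : ℝ) (_ : 0 < t), ENNReal.ofReal t *
    (∫⁻ x in {x | ENNReal.ofReal t < g x}, ENNReal.ofReal (w x)) ^ (1 / p)


-- aux: prod of fixed-base rpow
lemma prod_rpow_sum {ι : Type*} (s : Finset ι) {x : ℝ≥0∞} (hx : x ≠ 0) (hxt : x ≠ ⊤)
    (a : ι → ℝ) : ∏ i ∈ s, x ^ (a i) = x ^ (∑ i ∈ s, a i) := by
  classical
  induction s using Finset.induction with
  | empty => simp
  | insert a s hi ih =>
    rw [Finset.prod_insert hi, Finset.sum_insert hi, ih, ← ENNReal.rpow_add _ _ hx hxt]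

lemma holder_one {n : ℕ} {Q : Set (En n)} {wj : En n → ℝ} {fj : En n → ℝ}
    {I : ℝ≥0∞} (hI0 : I ≠ 0) (hIt : I ≠ ⊤)
    (hIle : I = essInf (fun y => ENNReal.ofReal (wj y)) (volume.restrict Q)) :
    ∫⁻ y in Q, ENNReal.ofReal |fj y| ≤
      I⁻¹ * ∫⁻ y in Q, ENNReal.ofReal (|fj y| ^ (1:ℝ) * wj y) := by
  have hae : ∀ᵐ y ∂(volume.restrict Q), I ≤ ENNReal.ofReal (wj y) := hIle ▸ ae_essInf_le
  calc ∫⁻ y in Q, ENNReal.ofReal |fj y|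
      ≤ ∫⁻ y in Q, I⁻¹ * ENNReal.ofReal (|fj y| ^ (1:ℝ) * wj y) := by
        refine lintegral_mono_ae (hae.mono fun y hy => ?_)
        rw [Real.rpow_one, ENNReal.ofReal_mul (abs_nonneg _)]
        calc ENNReal.ofReal |fj y| = I⁻¹ * I * ENNReal.ofReal |fj y| := by
              rw [ENNReal.inv_mul_cancel hI0 hIt, one_mul]
          _ ≤ I⁻¹ * ENNReal.ofReal (wj y) * ENNReal.ofReal |fj y| :=
              mul_le_mul_left (mul_le_mul_right hy _) _
          _ = I⁻¹ * (ENNReal.ofReal |fj y| * ENNReal.ofReal (wj y)) := by ring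
    _ = I⁻¹ * ∫⁻ y in Q, ENNReal.ofReal (|fj y| ^ (1:ℝ) * wj y) :=
        lintegral_const_mul' _ _ (ENNReal.inv_ne_top.2 hI0)

lemma holder_gt {n : ℕ} {Q : Set (En n)} {wj fj : En n → ℝ}
    (hwm : AEMeasurable wj volume) (hfm : Measurable fj) {pj : ℝ} (hpj : 1 < pj)
    (hpos : ∀ᵐ y ∂(volume.restrict Q), 0 < wj y) :
    ∫⁻ y in Q, ENNReal.ofReal |fj y| ≤
      (∫⁻ y in Q, ENNReal.ofReal (|fj y| ^ pj * wj y)) ^ pj⁻¹ *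
        (∫⁻ y in Q, (ENNReal.ofReal (wj y)) ^ (1 - pj / (pj - 1))) ^ (1 - pj⁻¹) := by
  have hpj0 : pj ≠ 0 := by positivity
  have hpj1 : pj - 1 ≠ 0 := by intro h; apply hpj.ne'; linarith
  have hconj : pj.HolderConjugate (pj / (pj - 1)) := by
    have := Real.HolderConjugate.conjExponent hpj
    rwa [Real.conjExponent] at this
  set F : En n → ℝ≥0∞ := fun y => (ENNReal.ofReal (|fj y| ^ pj * wj y)) ^ pj⁻¹ with hF
  set G : En n → ℝ≥0∞ := fun y => (ENNReal.ofReal (wj y)) ^ (-pj⁻¹) with hG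
  have hFm : AEMeasurable F (volume.restrict Q) := by
    exact ((((hfm.abs.pow_const pj).aemeasurable.mul hwm).restrict).ennreal_ofReal).pow_const _
  have hGm : AEMeasurable G (volume.restrict Q) := by
    exact ((hwm.restrict).ennreal_ofReal).pow_const _
  have step1 : ∫⁻ y in Q, ENNReal.ofReal |fj y| = ∫⁻ y in Q, (F * G) y := by
    refine lintegral_congr_ae (hpos.mono fun y hy => ?_)
    have hw0' : ENNReal.ofReal (wj y) ≠ 0 := by
      simp only [ne_eq, ENNReal.ofReal_eq_zero, not_le]; exact hy
    simp only [Pi.mul_apply, hF, hG]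
    rw [ENNReal.ofReal_mul (by positivity),
      ENNReal.mul_rpow_of_nonneg _ _ (by positivity : (0:ℝ) ≤ pj⁻¹),
      ← ENNReal.ofReal_rpow_of_nonneg (abs_nonneg _) (by positivity : (0:ℝ) ≤ pj),
      ← ENNReal.rpow_mul, mul_inv_cancel₀ hpj0, ENNReal.rpow_one, mul_assoc,
      ← ENNReal.rpow_add _ _ hw0' ENNReal.ofReal_ne_top]
    norm_num
  have step2 := ENNReal.lintegral_mul_le_Lp_mul_Lq (volume.restrict Q) hconj hFm hGm
  rw [← step1] at step2
  refine step2.trans ?_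
  have e1 : (∫⁻ a in Q, F a ^ pj) = ∫⁻ y in Q, ENNReal.ofReal (|fj y| ^ pj * wj y) :=
    lintegral_congr fun y => by
      simp only [hF]; rw [← ENNReal.rpow_mul, inv_mul_cancel₀ hpj0, ENNReal.rpow_one]
  have e2 : (∫⁻ a in Q, G a ^ (pj/(pj-1)))
      = ∫⁻ y in Q, (ENNReal.ofReal (wj y)) ^ (1 - pj/(pj-1)) :=
    lintegral_congr fun y => by
      simp only [hG]; rw [← ENNReal.rpow_mul]; congr 1; field_simp; ring
  have e4 : 1 / (pj/(pj-1)) = 1 - pj⁻¹ := by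
    rw [one_div, inv_div]; field_simp
  rw [e1, e2, e4, one_div]

lemma cube_eq_pi {n : ℕ} (x : En n) (r : ℝ) :
    cube x r = (MeasurableEquiv.toLp 2 (Fin n → ℝ)).symm ⁻¹'
      (Set.pi univ fun i => Icc (x i - r/2) (x i + r/2)) := by
  ext y
  simp only [cube, mem_setOf_eq, mem_preimage, Set.mem_pi, mem_univ, forall_true_left, mem_Icc,
    MeasurableEquiv.toLp_symm_apply]
  constructor
  · intro h i; have := abs_le.1 (h i)
    exact ⟨by linarith [this.1], by linarith [this.2]⟩
  · intro h i; rw [abs_le]; have := h i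
    exact ⟨by linarith [this.1], by linarith [this.2]⟩

lemma measurableSet_cube {n : ℕ} (x : En n) (r : ℝ) : MeasurableSet (cube x r) := by
  rw [cube_eq_pi]
  exact (MeasurableSet.univ_pi fun i => measurableSet_Icc).preimage (by measurability)

lemma volume_cube {n : ℕ} (x : En n) {r : ℝ} (hr : 0 ≤ r) :
    volume (cube x r) = ENNReal.ofReal (r ^ n) := by
  rw [cube_eq_pi,
    (EuclideanSpace.volume_preserving_symm_measurableEquiv_toLp (Fin n)).measure_preimage
      ((MeasurableSet.univ_pi fun i => measurableSet_Icc).nullMeasurableSet)]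
  rw [volume_pi_pi]
  simp only [Real.volume_Icc]
  have : ∀ i : Fin n, x i + r/2 - (x i - r/2) = r := fun i => by ring
  simp_rw [this]
  rw [Finset.prod_const, ← ENNReal.ofReal_pow hr, Finset.card_univ, Fintype.card_fin]

lemma key {n m : ℕ} (hm : 1 ≤ m) (p : Fin m → ℝ) (hp : ∀ j, 1 ≤ p j)
    (w : Fin m → En n → ℝ) (hwm : ∀ j, AEMeasurable (w j) volume)
    {θ θ₀ : ℝ} (hθ : 0 ≤ θ) (hθ₀ : θ ≤ θ₀) (C₀ : ℝ)
    (f : Fin m → En n → ℝ) (hf : ∀ j, Measurable (f j))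
    (c : En n) (r : ℝ) (hr : 0 < r)
    (hA : ((ENNReal.ofReal ((1 + r) ^ θ) * volume (cube c r))⁻¹ *
        ∫⁻ y in cube c r, ENNReal.ofReal (nuW p w y)) ^ (∑ i, (p i)⁻¹) *
      ∏ j,
        (if p j = 1 then
          (essInf (fun y => ENNReal.ofReal (w j y)) (volume.restrict (cube c r)))⁻¹
        else
          ((ENNReal.ofReal ((1 + r) ^ θ) * volume (cube c r))⁻¹ *
            ∫⁻ y in cube c r,
              ENNReal.ofReal (w j y) ^ (1 - p j / (p j - 1))) ^ (1 - (p j)⁻¹))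
      ≤ ENNReal.ofReal C₀) :
    (∫⁻ y in cube c r, ENNReal.ofReal (nuW p w y)) ^ (∑ i, (p i)⁻¹) *
      ∏ j, ((ENNReal.ofReal ((1 + r) ^ θ₀) * volume (cube c r))⁻¹ *
        ∫⁻ y in cube c r, ENNReal.ofReal |f j y|) ≤
    ENNReal.ofReal C₀ *
      ∏ j, (∫⁻ y in cube c r, ENNReal.ofReal (|f j y| ^ (p j) * w j y)) ^ (p j)⁻¹ := by
  classical
  haveI : Nonempty (Fin m) := ⟨⟨0, hm⟩⟩
  set Q := cube c r with hQdef
  set q := ∑ i, (p i)⁻¹ with hqdef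
  have hpj0 : ∀ j, (0:ℝ) < p j := fun j => lt_of_lt_of_le one_pos (hp j)
  have hq0 : 0 < q := Finset.sum_pos (fun i _ => inv_pos.2 (hpj0 i)) Finset.univ_nonempty
  have hV0 : volume Q ≠ 0 := by
    rw [hQdef, volume_cube c hr.le]; simp only [ne_eq, ENNReal.ofReal_eq_zero, not_le]; positivity
  have hVt : volume Q ≠ ⊤ := by rw [hQdef, volume_cube c hr.le]; exact ENNReal.ofReal_ne_top
  have h1r : (0:ℝ) < 1 + r := by linarith
  set Φ := ENNReal.ofReal ((1 + r) ^ θ) * volume Q with hΦdef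
  set Φ₀ := ENNReal.ofReal ((1 + r) ^ θ₀) * volume Q with hΦ₀def
  have hΦ0 : Φ ≠ 0 := mul_ne_zero (ENNReal.ofReal_pos.2 (by positivity)).ne' hV0
  have hΦt : Φ ≠ ⊤ := ENNReal.mul_ne_top ENNReal.ofReal_ne_top hVt
  have hΦ₀0 : Φ₀ ≠ 0 := mul_ne_zero (ENNReal.ofReal_pos.2 (by positivity)).ne' hV0
  have hΦ₀t : Φ₀ ≠ ⊤ := ENNReal.mul_ne_top ENNReal.ofReal_ne_top hVt
  have hΦle : Φ ≤ Φ₀ := mul_le_mul_left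
    (ENNReal.ofReal_le_ofReal (Real.rpow_le_rpow_of_exponent_le (by linarith) hθ₀)) _
  set ν := ∫⁻ y in Q, ENNReal.ofReal (nuW p w y) with hν
  by_cases hν0 : ν = 0
  · rw [hν0, ENNReal.zero_rpow_of_pos hq0, zero_mul]; exact zero_le
  -- restricted measure is nontrivial
  have hres : (volume.restrict Q : Measure (En n)) ≠ 0 := by
    refine fun h => hV0 ?_
    rw [← Measure.restrict_apply_univ, h]; simp
  haveI hresb : (ae (volume.restrict Q)).NeBot := ae_neBot.2 hres
  set B : Fin m → ℝ≥0∞ := fun j =>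
    if p j = 1 then
      (essInf (fun y => ENNReal.ofReal (w j y)) (volume.restrict Q))⁻¹
    else
      ((ENNReal.ofReal ((1 + r) ^ θ) * volume Q)⁻¹ *
        ∫⁻ y in Q, ENNReal.ofReal (w j y) ^ (1 - p j / (p j - 1))) ^ (1 - (p j)⁻¹) with hBdef
  have hB0 : ∀ j, B j ≠ 0 := by
    intro j
    by_cases hpj : p j = 1
    · simp only [hBdef, if_pos hpj]
      have hle : ∀ᵐ y ∂(volume.restrict Q),
          essInf (fun y => ENNReal.ofReal (w j y)) (volume.restrict Q) ≤
            ENNReal.ofReal (w j y) := ae_essInf_le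
      obtain ⟨y, hy⟩ := hle.exists
      exact ENNReal.inv_ne_zero.2 (lt_of_le_of_lt hy ENNReal.ofReal_lt_top).ne
    · have h1 : 1 < p j := lt_of_le_of_ne (hp j) (Ne.symm hpj)
      have hy0 : (0:ℝ) < 1 - (p j)⁻¹ := by
        have h2 : (p j)⁻¹ < 1 := by
          rw [inv_lt_one_iff₀]; right; exact h1
        linarith
      simp only [hBdef, if_neg hpj]
      intro h
      rcases ENNReal.rpow_eq_zero_iff.1 h with ⟨hz, -⟩ | ⟨-, hneg⟩
      · have hJ0 : (∫⁻ y in Q, ENNReal.ofReal (w j y) ^ (1 - p j / (p j - 1))) = 0 := by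
          rcases mul_eq_zero.1 hz with h' | h'
          · exact absurd h' (ENNReal.inv_ne_zero.2 hΦt)
          · exact h'
        have hmeas : AEMeasurable
            (fun y => ENNReal.ofReal (w j y) ^ (1 - p j / (p j - 1))) (volume.restrict Q) :=
          (((hwm j).restrict).ennreal_ofReal).pow_const _
        obtain ⟨y, hy⟩ := ((lintegral_eq_zero_iff' hmeas).1 hJ0).exists
        rw [Pi.zero_apply, ENNReal.rpow_eq_zero_iff] at hy
        rcases hy with ⟨h0, hlt⟩ | ⟨htop, -⟩
        · have : 1 - p j / (p j - 1) < 0 := by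
            rw [sub_neg, lt_div_iff₀ (by linarith)]
            linarith
          linarith
        · exact ENNReal.ofReal_ne_top htop
      · linarith
  have hprodB0 : ∏ j, B j ≠ 0 := Finset.prod_ne_zero_iff.2 fun j _ => hB0 j
  set X := Φ⁻¹ * ν with hX
  have hA' : X ^ q * ∏ j, B j ≤ ENNReal.ofReal C₀ := hA
  have hX0 : X ≠ 0 := mul_ne_zero (ENNReal.inv_ne_zero.2 hΦt) hν0
  have hXq0 : X ^ q ≠ 0 := by
    intro h
    rcases ENNReal.rpow_eq_zero_iff.1 h with ⟨h0, -⟩ | ⟨-, hlt⟩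
    · exact hX0 h0
    · linarith
  have hXqt : X ^ q ≠ ⊤ := by
    intro h
    have : X ^ q * ∏ j, B j = ⊤ := by rw [h]; exact ENNReal.top_mul hprodB0
    rw [this] at hA'
    exact ENNReal.ofReal_ne_top (top_le_iff.1 hA')
  have hBt : ∀ j, B j ≠ ⊤ := by
    intro j htop
    have hrest : ∏ k ∈ Finset.univ.erase j, B k ≠ 0 :=
      Finset.prod_ne_zero_iff.2 fun k _ => hB0 k
    have hsplit : ∏ k, B k = B j * ∏ k ∈ Finset.univ.erase j, B k :=
      (Finset.mul_prod_erase Finset.univ B (Finset.mem_univ j)).symm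
    have : X ^ q * ∏ k, B k = ⊤ := by
      rw [hsplit, htop, ENNReal.top_mul hrest]
      exact ENNReal.mul_top hXq0
    rw [this] at hA'
    exact ENNReal.ofReal_ne_top (top_le_iff.1 hA')
  have hνX : ν = Φ * X := by
    rw [hX, ← mul_assoc, ENNReal.mul_inv_cancel hΦ0 hΦt, one_mul]
  -- per-coordinate Hölder estimate
  have hHolder : ∀ j, (∫⁻ y in Q, ENNReal.ofReal |f j y|) ≤
      (∫⁻ y in Q, ENNReal.ofReal (|f j y| ^ (p j) * w j y)) ^ (p j)⁻¹ *
        (Φ ^ (1 - (p j)⁻¹) * B j) := by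
    intro j
    by_cases hpj : p j = 1
    · have hBj : B j = (essInf (fun y => ENNReal.ofReal (w j y)) (volume.restrict Q))⁻¹ := by
        simp only [hBdef, if_pos hpj]
      have hI0 : essInf (fun y => ENNReal.ofReal (w j y)) (volume.restrict Q) ≠ 0 := by
        have := hBt j; rw [hBj] at this; exact ENNReal.inv_ne_top.1 this
      have hIt : essInf (fun y => ENNReal.ofReal (w j y)) (volume.restrict Q) ≠ ⊤ := by
        have := hB0 j; rw [hBj] at this; exact ENNReal.inv_ne_zero.1 this
      have h := holder_one (fj := f j) hI0 hIt rfl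
      rw [hpj, inv_one, sub_self, ENNReal.rpow_zero, one_mul, ENNReal.rpow_one, hBj, mul_comm]
      exact h
    · have h1 : 1 < p j := lt_of_le_of_ne (hp j) (Ne.symm hpj)
      have hs0 : (0:ℝ) < 1 - (p j)⁻¹ := by
        have h2 : (p j)⁻¹ < 1 := by rw [inv_lt_one_iff₀]; right; exact h1
        linarith
      have hBj : B j = ((ENNReal.ofReal ((1 + r) ^ θ) * volume Q)⁻¹ *
          ∫⁻ y in Q, ENNReal.ofReal (w j y) ^ (1 - p j / (p j - 1))) ^ (1 - (p j)⁻¹) := by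
        simp only [hBdef, if_neg hpj]
      set J := ∫⁻ y in Q, ENNReal.ofReal (w j y) ^ (1 - p j / (p j - 1)) with hJ
      have hJt : J ≠ ⊤ := by
        intro hJtop
        apply hBt j
        rw [hBj, hJtop, ENNReal.mul_top (ENNReal.inv_ne_zero.2 hΦt),
          ENNReal.top_rpow_of_pos hs0]
      have hmeas : AEMeasurable
          (fun y => ENNReal.ofReal (w j y) ^ (1 - p j / (p j - 1))) (volume.restrict Q) :=
        (((hwm j).restrict).ennreal_ofReal).pow_const _
      have hpos : ∀ᵐ y ∂(volume.restrict Q), 0 < w j y := by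
        refine (ae_lt_top' hmeas hJt).mono fun y hy => ?_
        by_contra hw
        push_neg at hw
        rw [ENNReal.ofReal_eq_zero.2 hw] at hy
        have he : 1 - p j / (p j - 1) < 0 := by
          rw [sub_neg, lt_div_iff₀ (by linarith)]; linarith
        rw [ENNReal.zero_rpow_of_neg he] at hy
        exact (lt_irrefl _ hy).elim
      have h := holder_gt (Q := Q) (hwm j) (hf j) h1 hpos
      refine h.trans (le_of_eq ?_)
      congr 1
      rw [hBj, ENNReal.mul_rpow_of_ne_top (ENNReal.inv_ne_top.2 hΦ0) hJt,
        ← mul_assoc, ← ENNReal.mul_rpow_of_ne_top hΦt (ENNReal.inv_ne_top.2 hΦ0),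
        ENNReal.mul_inv_cancel hΦ0 hΦt, ENNReal.one_rpow, one_mul]
  -- assemble
  calc ν ^ q * ∏ j, (Φ₀⁻¹ * ∫⁻ y in Q, ENNReal.ofReal |f j y|)
      ≤ ν ^ q * ∏ j, (Φ₀⁻¹ *
          ((∫⁻ y in Q, ENNReal.ofReal (|f j y| ^ (p j) * w j y)) ^ (p j)⁻¹ *
            (Φ ^ (1 - (p j)⁻¹) * B j))) := by
        refine mul_le_mul_right (Finset.prod_le_prod' fun j _ => ?_) _
        exact mul_le_mul_right (hHolder j) _
    _ = (∏ j, (∫⁻ y in Q, ENNReal.ofReal (|f j y| ^ (p j) * w j y)) ^ (p j)⁻¹) *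
          ((X ^ q * ∏ j, B j) *
            ((Φ ^ q * Φ ^ ((m:ℝ) - q)) * (Φ₀⁻¹) ^ (m:ℕ))) := by
        rw [hνX, ENNReal.mul_rpow_of_nonneg _ _ hq0.le]
        rw [Finset.prod_mul_distrib, Finset.prod_mul_distrib, Finset.prod_mul_distrib,
          Finset.prod_const, Finset.card_univ, Fintype.card_fin,
          prod_rpow_sum Finset.univ hΦ0 hΦt]
        have hsum : ∑ j : Fin m, (1 - (p j)⁻¹) = (m:ℝ) - q := by
          rw [Finset.sum_sub_distrib, Finset.sum_const, Finset.card_univ, Fintype.card_fin,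
            nsmul_eq_mul, mul_one, hqdef]
        rw [hsum]
        ring
    _ ≤ (∏ j, (∫⁻ y in Q, ENNReal.ofReal (|f j y| ^ (p j) * w j y)) ^ (p j)⁻¹) *
          (ENNReal.ofReal C₀ * 1) := by
        refine mul_le_mul_right (mul_le_mul' hA' ?_) _
        have hqm : q + ((m:ℝ) - q) = (m:ℝ) := by ring
        rw [← ENNReal.rpow_add _ _ hΦ0 hΦt, hqm, ← ENNReal.rpow_natCast (Φ₀⁻¹) m,
          ← ENNReal.mul_rpow_of_nonneg _ _ (by positivity : (0:ℝ) ≤ (m:ℝ))]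
        refine le_trans (ENNReal.rpow_le_rpow (?_ : Φ * Φ₀⁻¹ ≤ 1) (by positivity)) ?_
        · calc Φ * Φ₀⁻¹ ≤ Φ₀ * Φ₀⁻¹ := mul_le_mul_left hΦle _
            _ ≤ 1 := le_of_eq (ENNReal.mul_inv_cancel hΦ₀0 hΦ₀t)
        · rw [ENNReal.one_rpow]
    _ = ENNReal.ofReal C₀ *
          ∏ j, (∫⁻ y in Q, ENNReal.ofReal (|f j y| ^ (p j) * w j y)) ^ (p j)⁻¹ := by
        rw [mul_one, mul_comm]

lemma cube_subset_double {n : ℕ} {c x : En n} {r : ℝ} (hr : 0 < r) (hx : x ∈ cube c r) :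
    cube c r ⊆ cube x (2 * r) := by
  intro y hy i
  have h1 := hy i
  have h2 := hx i
  have : |y i - x i| ≤ |y i - c i| + |x i - c i| := by
    have := abs_sub_abs_le_abs_sub (y i - c i) (x i - c i)
    have h3 := abs_sub (y i - c i) (x i - c i)
    calc |y i - x i| = |(y i - c i) - (x i - c i)| := by ring_nf
      _ ≤ |y i - c i| + |x i - c i| := abs_sub _ _
  calc |y i - x i| ≤ |y i - c i| + |x i - c i| := this
    _ ≤ r / 2 + r / 2 := add_le_add h1 h2
    _ = 2 * r / 2 := by ring

lemma avg_double {n : ℕ} {θ₀ : ℝ} (hθ₀ : 0 ≤ θ₀) {c x : En n} {r : ℝ} (hr : 0 < r)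
    (hx : x ∈ cube c r) (g : En n → ℝ≥0∞) :
    (ENNReal.ofReal ((1 + r) ^ θ₀) * volume (cube c r))⁻¹ * ∫⁻ y in cube c r, g y ≤
      ENNReal.ofReal ((2:ℝ) ^ ((n:ℝ) + θ₀)) *
        ((ENNReal.ofReal ((1 + 2 * r) ^ θ₀) * volume (cube x (2 * r)))⁻¹ *
          ∫⁻ y in cube x (2 * r), g y) := by
  have h1r : (0:ℝ) < 1 + r := by linarith
  have hIle : (∫⁻ y in cube c r, g y) ≤ ∫⁻ y in cube x (2 * r), g y :=
    lintegral_mono' (Measure.restrict_mono (cube_subset_double hr hx) le_rfl) le_rfl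
  set K := ENNReal.ofReal ((2:ℝ) ^ ((n:ℝ) + θ₀)) with hK
  have hK0 : K ≠ 0 := (ENNReal.ofReal_pos.2 (by positivity)).ne'
  have hKt : K ≠ ⊤ := ENNReal.ofReal_ne_top
  set Φc := ENNReal.ofReal ((1 + r) ^ θ₀) * volume (cube c r) with hΦc
  set Φx := ENNReal.ofReal ((1 + 2 * r) ^ θ₀) * volume (cube x (2 * r)) with hΦx
  have hΦc0 : Φc ≠ 0 := by
    rw [hΦc, volume_cube c hr.le]
    exact mul_ne_zero (ENNReal.ofReal_pos.2 (by positivity)).ne'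
      (ENNReal.ofReal_pos.2 (by positivity)).ne'
  have hΦct : Φc ≠ ⊤ := by
    rw [hΦc, volume_cube c hr.le]; exact ENNReal.mul_ne_top ENNReal.ofReal_ne_top
      ENNReal.ofReal_ne_top
  have hcmp : Φx ≤ K * Φc := by
    rw [hΦx, hΦc, hK, volume_cube c hr.le, volume_cube x (by linarith : (0:ℝ) ≤ 2 * r)]
    rw [← ENNReal.ofReal_mul (by positivity), ← ENNReal.ofReal_mul (by positivity),
      ← ENNReal.ofReal_mul (by positivity)]
    refine ENNReal.ofReal_le_ofReal ?_
    have e1 : (1 + 2 * r) ^ θ₀ ≤ (2 * (1 + r)) ^ θ₀ :=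
      Real.rpow_le_rpow (by linarith) (by linarith) hθ₀
    have e2 : (2 * (1 + r)) ^ θ₀ = 2 ^ θ₀ * (1 + r) ^ θ₀ :=
      Real.mul_rpow (by norm_num) (by positivity)
    have e3 : (2 * r) ^ n = 2 ^ n * r ^ n := by rw [mul_pow]
    have e4 : (2:ℝ) ^ ((n:ℝ) + θ₀) = 2 ^ (n:ℕ) * 2 ^ θ₀ := by
      rw [Real.rpow_add (by norm_num), Real.rpow_natCast]
    calc (1 + 2 * r) ^ θ₀ * (2 * r) ^ n ≤ 2 ^ θ₀ * (1 + r) ^ θ₀ * (2 ^ n * r ^ n) := by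
          rw [e3]
          refine mul_le_mul (by rw [← e2]; exact e1) le_rfl (by positivity) (by positivity)
      _ = 2 ^ ((n:ℝ) + θ₀) * ((1 + r) ^ θ₀ * r ^ n) := by rw [e4]; ring
  have hinv : Φc⁻¹ ≤ K * Φx⁻¹ := by
    have h1 : (K * Φc)⁻¹ ≤ Φx⁻¹ := ENNReal.inv_le_inv' hcmp
    have h2 : Φc⁻¹ = K * (K * Φc)⁻¹ := by
      rw [ENNReal.mul_inv (Or.inl hK0) (Or.inl hKt), ← mul_assoc,
        ENNReal.mul_inv_cancel hK0 hKt, one_mul]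
    rw [h2]
    exact mul_le_mul_right h1 _
  calc Φc⁻¹ * ∫⁻ y in cube c r, g y ≤ (K * Φx⁻¹) * ∫⁻ y in cube x (2 * r), g y :=
        mul_le_mul' hinv hIle
    _ = K * (Φx⁻¹ * ∫⁻ y in cube x (2 * r), g y) := by rw [mul_assoc]

lemma cube_eq_closedBall {n : ℕ} (x : En n) {ρ : ℝ} (hρ : 0 ≤ ρ) :
    cube x (2 * ρ) = WithLp.ofLp ⁻¹' @Metric.closedBall (Fin n → ℝ) _ (WithLp.ofLp x) ρ := by
  ext y
  simp only [cube, mem_setOf_eq, mem_preimage, Metric.mem_closedBall]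
  rw [dist_pi_le_iff hρ]
  constructor
  · intro h i; rw [Real.dist_eq]; have := h i; linarith
  · intro h i; have := h i; rw [Real.dist_eq] at this; linarith

lemma core_bound {n m : ℕ} (hm : 1 ≤ m) (p : Fin m → ℝ) (hp : ∀ j, 1 ≤ p j)
    (w : Fin m → En n → ℝ) (hwm : ∀ j, AEMeasurable (w j) volume)
    {θ θ₀ : ℝ} (hθ : 0 ≤ θ) (hθ₀ : θ ≤ θ₀) (hθ₀0 : 0 ≤ θ₀) {C₀ : ℝ}
    (hA : ∀ (x : En n) (r : ℝ), 0 < r →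
      ((ENNReal.ofReal ((1 + r) ^ θ) * volume (cube x r))⁻¹ *
          ∫⁻ y in cube x r, ENNReal.ofReal (nuW p w y)) ^ (∑ i, (p i)⁻¹) *
        ∏ j,
          (if p j = 1 then
            (essInf (fun y => ENNReal.ofReal (w j y)) (volume.restrict (cube x r)))⁻¹
          else
            ((ENNReal.ofReal ((1 + r) ^ θ) * volume (cube x r))⁻¹ *
              ∫⁻ y in cube x r,
                ENNReal.ofReal (w j y) ^ (1 - p j / (p j - 1))) ^ (1 - (p j)⁻¹))
        ≤ ENNReal.ofReal C₀)
    (f : Fin m → En n → ℝ) (hf : ∀ j, Measurable (f j))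
    {N : ℕ} {τ : ℝ} (hτ : 1 < τ)
    (hsat : IsEmpty (Besicovitch.SatelliteConfig (Fin n → ℝ) N τ))
    {t : ℝ} (ht : 0 < t) (R : ℕ) :
    volume.withDensity (fun x => ENNReal.ofReal (nuW p w x))
      {x : En n | ∃ cc rr, 0 < rr ∧ rr ≤ (R:ℝ) + 1 ∧ x ∈ cube cc rr ∧
        ENNReal.ofReal t < ∏ j, ((ENNReal.ofReal ((1 + rr) ^ θ₀) * volume (cube cc rr))⁻¹ *
          ∫⁻ y in cube cc rr, ENNReal.ofReal |f j y|)} ≤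
    (N : ℝ≥0∞) *
      ((ENNReal.ofReal (((2:ℝ) ^ ((n:ℝ) + θ₀)) ^ (m:ℕ)) * ENNReal.ofReal C₀ *
          (ENNReal.ofReal t)⁻¹) ^ (∑ i : Fin m, (p i)⁻¹)⁻¹ *
        ∏ k, (∫⁻ x, ENNReal.ofReal (|f k x| ^ (p k) * w k x)) ^
          ((p k)⁻¹ * (∑ i : Fin m, (p i)⁻¹)⁻¹)) := by
  classical
  haveI : Nonempty (Fin m) := ⟨⟨0, hm⟩⟩
  set q := ∑ i : Fin m, (p i)⁻¹ with hqdef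
  have hpj0 : ∀ j, (0:ℝ) < p j := fun j => lt_of_lt_of_le one_pos (hp j)
  have hq0 : 0 < q := Finset.sum_pos (fun i _ => inv_pos.2 (hpj0 i)) Finset.univ_nonempty
  set κ := (2:ℝ) ^ ((n:ℝ) + θ₀) with hκdef
  have hκ0 : (0:ℝ) < κ := by positivity
  set gν : En n → ℝ≥0∞ := fun x => ENNReal.ofReal (nuW p w x) with hgν
  set μw := volume.withDensity gν with hμw
  set Z₀ := ENNReal.ofReal (κ ^ (m:ℕ)) * ENNReal.ofReal C₀ * (ENNReal.ofReal t)⁻¹ with hZ₀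
  set Htot : Fin m → ℝ≥0∞ := fun k => ∫⁻ x, ENNReal.ofReal (|f k x| ^ (p k) * w k x)
    with hHtot
  set T := {x : En n | ∃ cc rr, 0 < rr ∧ rr ≤ (R:ℝ) + 1 ∧ x ∈ cube cc rr ∧
      ENNReal.ofReal t < ∏ j, ((ENNReal.ofReal ((1 + rr) ^ θ₀) * volume (cube cc rr))⁻¹ *
        ∫⁻ y in cube cc rr, ENNReal.ofReal |f j y|)} with hTdef
  -- choose data
  have hdata : ∀ x : T, ∃ ccrr : En n × ℝ, 0 < ccrr.2 ∧ ccrr.2 ≤ (R:ℝ) + 1 ∧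
      (x : En n) ∈ cube ccrr.1 ccrr.2 ∧
      ENNReal.ofReal t < ∏ j, ((ENNReal.ofReal ((1 + ccrr.2) ^ θ₀) *
        volume (cube ccrr.1 ccrr.2))⁻¹ *
          ∫⁻ y in cube ccrr.1 ccrr.2, ENNReal.ofReal |f j y|) := by
    rintro ⟨x, hx⟩
    obtain ⟨cc, rr, h1, h2, h3, h4⟩ := hx
    exact ⟨(cc, rr), h1, h2, h3, h4⟩
  choose dat hd1 hd2 hd3 hd4 using hdata
  set pkg : Besicovitch.BallPackage T (Fin n → ℝ) :=
    { c := fun x => WithLp.ofLp (x : En n), r := fun x => (dat x).2, rpos := hd1,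
      r_bound := (R:ℝ) + 1, r_le := hd2 } with hpkg
  obtain ⟨u, hu, hu'⟩ := Besicovitch.exist_disjoint_covering_families hτ hsat pkg
  have hball : ∀ x : T, WithLp.ofLp ⁻¹' Metric.closedBall (pkg.c x) (pkg.r x) =
      cube (x : En n) (2 * (dat x).2) := fun x =>
    (cube_eq_closedBall (x : En n) (hd1 x).le).symm
  -- the per-ball bound
  have hball_bound : ∀ x : T, μw (cube (x : En n) (2 * (dat x).2)) ≤
      Z₀ ^ q⁻¹ * ∏ k, (∫⁻ y in cube (x : En n) (2 * (dat x).2),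
        ENNReal.ofReal (|f k y| ^ (p k) * w k y)) ^ ((p k)⁻¹ * q⁻¹) := by
    intro x
    set rr := (dat x).2
    set Q' := cube (x : En n) (2 * rr) with hQ'
    have hr' : (0:ℝ) < 2 * rr := by have := hd1 x; linarith
    have hKey := key hm p hp w hwm hθ hθ₀ C₀ f hf (x : En n) (2 * rr) hr'
      (hA (x : En n) (2 * rr) hr')
    have hμQ' : μw Q' = ∫⁻ y in Q', gν y := withDensity_apply _ (measurableSet_cube _ _)
    -- lower bound for the averages over Q'
    have havg : ENNReal.ofReal t ≤ ENNReal.ofReal (κ ^ (m:ℕ)) *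
        ∏ j, ((ENNReal.ofReal ((1 + 2 * rr) ^ θ₀) * volume Q')⁻¹ *
          ∫⁻ y in Q', ENNReal.ofReal |f j y|) := by
      refine le_trans (hd4 x).le ?_
      calc ∏ j, ((ENNReal.ofReal ((1 + (dat x).2) ^ θ₀) * volume (cube (dat x).1 (dat x).2))⁻¹ *
            ∫⁻ y in cube (dat x).1 (dat x).2, ENNReal.ofReal |f j y|)
          ≤ ∏ j, (ENNReal.ofReal κ *
            ((ENNReal.ofReal ((1 + 2 * rr) ^ θ₀) * volume Q')⁻¹ *
              ∫⁻ y in Q', ENNReal.ofReal |f j y|)) := by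
            refine Finset.prod_le_prod' fun j _ => ?_
            exact avg_double hθ₀0 (hd1 x) (hd3 x) _
        _ = ENNReal.ofReal (κ ^ (m:ℕ)) *
            ∏ j, ((ENNReal.ofReal ((1 + 2 * rr) ^ θ₀) * volume Q')⁻¹ *
              ∫⁻ y in Q', ENNReal.ofReal |f j y|) := by
            rw [Finset.prod_mul_distrib, Finset.prod_const, Finset.card_univ, Fintype.card_fin,
              ← ENNReal.ofReal_pow hκ0.le]
    have ht0 : ENNReal.ofReal t ≠ 0 := (ENNReal.ofReal_pos.2 ht).ne'
    have hstep : μw Q' ^ q * ENNReal.ofReal t ≤ ENNReal.ofReal (κ ^ (m:ℕ)) *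
        (ENNReal.ofReal C₀ * ∏ j, (∫⁻ y in Q',
          ENNReal.ofReal (|f j y| ^ (p j) * w j y)) ^ (p j)⁻¹) := by
      calc μw Q' ^ q * ENNReal.ofReal t
          ≤ μw Q' ^ q * (ENNReal.ofReal (κ ^ (m:ℕ)) *
            ∏ j, ((ENNReal.ofReal ((1 + 2 * rr) ^ θ₀) * volume Q')⁻¹ *
              ∫⁻ y in Q', ENNReal.ofReal |f j y|)) := mul_le_mul_right havg _
        _ = ENNReal.ofReal (κ ^ (m:ℕ)) * ((∫⁻ y in Q', gν y) ^ q *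
            ∏ j, ((ENNReal.ofReal ((1 + 2 * rr) ^ θ₀) * volume Q')⁻¹ *
              ∫⁻ y in Q', ENNReal.ofReal |f j y|)) := by rw [hμQ']; ring
        _ ≤ ENNReal.ofReal (κ ^ (m:ℕ)) * (ENNReal.ofReal C₀ * ∏ j, (∫⁻ y in Q',
            ENNReal.ofReal (|f j y| ^ (p j) * w j y)) ^ (p j)⁻¹) :=
            mul_le_mul_right hKey _
    have hb : μw Q' ^ q ≤ Z₀ * ∏ j, (∫⁻ y in Q',
        ENNReal.ofReal (|f j y| ^ (p j) * w j y)) ^ (p j)⁻¹ := by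
      have h2 : μw Q' ^ q = μw Q' ^ q * ENNReal.ofReal t * (ENNReal.ofReal t)⁻¹ := by
        rw [mul_assoc, ENNReal.mul_inv_cancel ht0 ENNReal.ofReal_ne_top, mul_one]
      rw [h2]
      refine le_trans (mul_le_mul_left hstep _) (le_of_eq ?_)
      rw [hZ₀]; ring
    have h3 : μw Q' = (μw Q' ^ q) ^ q⁻¹ := by
      rw [← ENNReal.rpow_mul, mul_inv_cancel₀ hq0.ne', ENNReal.rpow_one]
    rw [h3]
    refine le_trans (ENNReal.rpow_le_rpow hb (inv_nonneg.2 hq0.le)) (le_of_eq ?_)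
    rw [ENNReal.mul_rpow_of_nonneg _ _ (inv_nonneg.2 hq0.le)]
    congr 1
    rw [← ENNReal.prod_rpow_of_nonneg (inv_nonneg.2 hq0.le)]
    refine Finset.prod_congr rfl fun j _ => ?_
    rw [← ENNReal.rpow_mul]
  -- countability of the families
  have hcnt : ∀ i, (u i).Countable := by
    intro i
    refine Set.PairwiseDisjoint.countable_of_isOpen
      ((hu i).mono fun x => Metric.ball_subset_closedBall)
      (fun x _ => Metric.isOpen_ball) (fun x _ => Metric.nonempty_ball.2 (hd1 x))
  -- covering
  have hcover : T ⊆ ⋃ i : Fin N, ⋃ x ∈ u i, cube ((x : T) : En n) (2 * (dat x).2) := by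
    intro y hy
    have hmem : WithLp.ofLp y ∈ range pkg.c := ⟨⟨y, hy⟩, rfl⟩
    have := hu' hmem
    simp only [mem_iUnion] at this ⊢
    obtain ⟨i, x, hxu, hxy⟩ := this
    refine ⟨i, x, hxu, ?_⟩
    have hsub : WithLp.ofLp ⁻¹' Metric.ball (pkg.c x) (pkg.r x) ⊆ cube ((x : T) : En n) (2 * (dat x).2) :=
      subset_trans (preimage_mono Metric.ball_subset_closedBall) (le_of_eq (hball x))
    exact hsub hxy
  -- sum the measures
  have hμle : μw T ≤ ∑ i : Fin N, ∑' x : (u i), μw (cube ((x : T) : En n) (2 * (dat (x : T)).2)) := by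
    calc μw T ≤ μw (⋃ i : Fin N, ⋃ x ∈ u i, cube ((x : T) : En n) (2 * (dat x).2)) :=
          measure_mono hcover
      _ ≤ ∑ i : Fin N, μw (⋃ x ∈ u i, cube ((x : T) : En n) (2 * (dat x).2)) := by
          refine le_trans (measure_iUnion_le _) ?_
          rw [tsum_fintype]
      _ ≤ ∑ i : Fin N, ∑' x : (u i), μw (cube ((x : T) : En n) (2 * (dat (x : T)).2)) :=
          Finset.sum_le_sum fun i _ => measure_biUnion_le μw (hcnt i) _
  -- per family bound via Hoelder
  have hper : ∀ i : Fin N, (∑' x : (u i),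
      μw (cube ((x : T) : En n) (2 * (dat (x : T)).2))) ≤
      Z₀ ^ q⁻¹ * ∏ k, (Htot k) ^ ((p k)⁻¹ * q⁻¹) := by
    intro i
    haveI hcnti : Countable (u i) := (hcnt i).to_subtype
    letI : MeasurableSpace (u i) := ⊤
    haveI : MeasurableSingletonClass (u i) := ⟨fun _ => trivial⟩
    set a : Fin m → (u i) → ℝ≥0∞ := fun k x => ∫⁻ y in cube ((x : T) : En n)
      (2 * (dat (x : T)).2), ENNReal.ofReal (|f k y| ^ (p k) * w k y) with ha
    have hsum1 : (∑' x : (u i), μw (cube ((x : T) : En n) (2 * (dat (x : T)).2))) ≤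
        Z₀ ^ q⁻¹ * ∑' x : (u i), ∏ k, (a k x) ^ ((p k)⁻¹ * q⁻¹) := by
      rw [← ENNReal.tsum_mul_left]
      exact ENNReal.tsum_le_tsum fun x => hball_bound x
    refine hsum1.trans (mul_le_mul_right ?_ _)
    -- Hoelder over the counting measure
    have hHolder : ∑' x : (u i), ∏ k, (a k x) ^ ((p k)⁻¹ * q⁻¹) ≤
        ∏ k, (∑' x : (u i), a k x) ^ ((p k)⁻¹ * q⁻¹) := by
      have := ENNReal.lintegral_prod_norm_pow_le (μ := Measure.count) Finset.univ
        (f := fun k x => a k x) (fun k _ => measurable_from_top.aemeasurable)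
        (p := fun k => (p k)⁻¹ * q⁻¹) ?_ (fun k _ => mul_nonneg (inv_nonneg.2 (hpj0 k).le) (inv_nonneg.2 hq0.le))
      · rw [lintegral_count] at this
        refine this.trans (le_of_eq (Finset.prod_congr rfl fun k _ => ?_))
        rw [lintegral_count]
      · rw [← Finset.sum_mul, ← hqdef, mul_inv_cancel₀ hq0.ne']
    refine hHolder.trans (Finset.prod_le_prod' fun k _ => ?_)
    refine ENNReal.rpow_le_rpow ?_ (mul_nonneg (inv_nonneg.2 (hpj0 k).le) (inv_nonneg.2 hq0.le))
    -- disjointness: sum of integrals over disjoint cubes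
    have hdisj : Pairwise (Function.onFun Disjoint fun x : (u i) =>
        cube ((x : T) : En n) (2 * (dat (x : T)).2)) := by
      have h1 : (u i).PairwiseDisjoint fun x : T => cube (x : En n) (2 * (dat x).2) := by
        have := hu i
        intro a ha b hb hab
        show Disjoint (cube ((a : T) : En n) (2 * (dat a).2)) (cube ((b : T) : En n) (2 * (dat b).2))
        rw [← hball a, ← hball b]
        exact Disjoint.preimage _ (this ha hb hab)
      exact (pairwise_subtype_iff_pairwise_set (u i) _).2 h1
    have := lintegral_iUnion (μ := volume) (fun x : (u i) => measurableSet_cube _ _) hdisj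
      (fun y => ENNReal.ofReal (|f k y| ^ (p k) * w k y))
    rw [ha, ← this]
    exact setLIntegral_le_lintegral _ _
  -- conclude
  refine hμle.trans ?_
  refine le_trans (Finset.sum_le_sum fun i _ => hper i) (le_of_eq ?_)
  rw [Finset.sum_const, Finset.card_univ, Fintype.card_fin, nsmul_eq_mul]

/-- Lemma 2.7: weak-type weighted boundedness of the multilinear maximal
operator `𝓜_{φ,θ₀}` for `ω⃗ ∈ A_{p⃗}^∞(φ)` with all `p_j ≥ 1`. -/
theorem stmt16 (n m : ℕ) (hn : 0 < n) (hm : 1 ≤ m) (p : Fin m → ℝ)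
    (hp : ∀ j, 1 ≤ p j) (w : Fin m → En n → ℝ)
    (hw : ∃ θ ≥ 0, MultiApTheta n m p θ w) :
    ∃ θ₀ > 0, ∃ C > 0, ∀ f : Fin m → En n → ℝ, (∀ j, Measurable (f j)) →
      wLpWeakE n (∑ j, (p j)⁻¹)⁻¹ (nuW p w) (multiMax n m θ₀ f) ≤
        ENNReal.ofReal C * ∏ j, wLp (p j) (w j) (f j) := by
  classical
  obtain ⟨θ, hθ, hw0, hwloc, C₀, hC₀, hA⟩ := hw
  haveI : Nonempty (Fin m) := ⟨⟨0, hm⟩⟩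
  have hwm : ∀ j, AEMeasurable (w j) volume := fun j =>
    (hwloc j).aestronglyMeasurable.aemeasurable
  set q := ∑ i : Fin m, (p i)⁻¹ with hqdef
  have hpj0 : ∀ j, (0:ℝ) < p j := fun j => lt_of_lt_of_le one_pos (hp j)
  have hq0 : 0 < q := Finset.sum_pos (fun i _ => inv_pos.2 (hpj0 i)) Finset.univ_nonempty
  have hqm : q ≤ (m:ℝ) := by
    calc q ≤ ∑ _i : Fin m, (1:ℝ) := Finset.sum_le_sum fun i _ => by
          rw [inv_le_one_iff₀]; right; exact hp i
      _ = (m:ℝ) := by simp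
  obtain ⟨N, τ, hτ, hsat⟩ :=
    (inferInstance : HasBesicovitchCovering (Fin n → ℝ)).no_satelliteConfig
  set θ₀ := θ + 1 with hθ₀def
  have hθ₀pos : 0 < θ₀ := by linarith
  set κ := (2:ℝ) ^ ((n:ℝ) + θ₀) with hκdef
  have hκ0 : (0:ℝ) < κ := by positivity
  refine ⟨θ₀, hθ₀pos, ((N:ℝ) + 1) ^ (m:ℕ) * (κ ^ (m:ℕ) * C₀), by positivity, ?_⟩
  intro f hf
  rw [wLpWeakE]
  refine iSup₂_le fun t ht => ?_
  have ht0 : ENNReal.ofReal t ≠ 0 := (ENNReal.ofReal_pos.2 ht).ne'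
  have hexp : 1 / ((∑ j : Fin m, (p j)⁻¹)⁻¹) = q := by rw [one_div, inv_inv]
  rw [hexp]
  set gν : En n → ℝ≥0∞ := fun x => ENNReal.ofReal (nuW p w x) with hgν
  set μw := volume.withDensity gν with hμw
  set S := {x : En n | ENNReal.ofReal t < multiMax n m θ₀ f x} with hS
  set Htot : Fin m → ℝ≥0∞ := fun k => ∫⁻ x, ENNReal.ofReal (|f k x| ^ (p k) * w k x)
    with hHtot
  set Z₀ := ENNReal.ofReal (κ ^ (m:ℕ)) * ENNReal.ofReal C₀ * (ENNReal.ofReal t)⁻¹ with hZ₀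
  have hSle : (∫⁻ x in S, gν x) ≤ μw S := by
    calc ∫⁻ x in S, gν x ≤ ∫⁻ x in toMeasurable μw S, gν x :=
          lintegral_mono' (Measure.restrict_mono (subset_toMeasurable _ _) le_rfl) le_rfl
      _ = μw (toMeasurable μw S) :=
          (withDensity_apply _ (measurableSet_toMeasurable _ _)).symm
      _ = μw S := measure_toMeasurable _
  set T : ℕ → Set (En n) := fun R => {x : En n | ∃ cc rr, 0 < rr ∧ rr ≤ (R:ℝ) + 1 ∧
      x ∈ cube cc rr ∧
      ENNReal.ofReal t < ∏ j, ((ENNReal.ofReal ((1 + rr) ^ θ₀) * volume (cube cc rr))⁻¹ *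
        ∫⁻ y in cube cc rr, ENNReal.ofReal |f j y|)} with hT
  have hTmono : Monotone T := by
    intro a b hab x hx
    obtain ⟨cc, rr, h1, h2, h3, h4⟩ := hx
    exact ⟨cc, rr, h1, h2.trans (by have := (Nat.cast_le (α := ℝ)).2 hab; linarith),
      h3, h4⟩
  have hST : S = ⋃ R, T R := by
    ext x
    simp only [hS, mem_setOf_eq, mem_iUnion, hT]
    constructor
    · intro hx
      rw [multiMax] at hx
      rw [lt_iSup_iff] at hx
      obtain ⟨c, hc⟩ := hx
      rw [lt_iSup_iff] at hc
      obtain ⟨r, hr⟩ := hc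
      rw [lt_iSup_iff] at hr
      obtain ⟨hr0, hr'⟩ := hr
      rw [lt_iSup_iff] at hr'
      obtain ⟨hxc, hlt⟩ := hr'
      refine ⟨⌈r⌉₊, c, r, hr0, ?_, hxc, hlt⟩
      have := Nat.le_ceil r
      linarith
    · rintro ⟨R, c, r, h1, h2, h3, h4⟩
      refine h4.trans_le ?_
      rw [multiMax]
      refine le_iSup_of_le c ?_
      refine le_iSup_of_le r ?_
      refine le_iSup_of_le h1 ?_
      exact le_iSup_of_le h3 le_rfl
  have hcore : ∀ R : ℕ, μw (T R) ≤ (N : ℝ≥0∞) *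
      (Z₀ ^ q⁻¹ * ∏ k, (Htot k) ^ ((p k)⁻¹ * q⁻¹)) := by
    intro R
    exact core_bound hm p hp w hwm hθ (by linarith) (by linarith) hA f hf hτ hsat ht R
  have hμwS : μw S ≤ (N : ℝ≥0∞) * (Z₀ ^ q⁻¹ * ∏ k, (Htot k) ^ ((p k)⁻¹ * q⁻¹)) := by
    rw [hST, Directed.measure_iUnion (hTmono.directed_le)]
    exact iSup_le hcore
  -- final computation
  calc ENNReal.ofReal t * (∫⁻ x in S, gν x) ^ q
      ≤ ENNReal.ofReal t *
        ((N : ℝ≥0∞) * (Z₀ ^ q⁻¹ * ∏ k, (Htot k) ^ ((p k)⁻¹ * q⁻¹))) ^ q :=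
        mul_le_mul_right (ENNReal.rpow_le_rpow (hSle.trans hμwS) hq0.le) _
    _ = ENNReal.ofReal t * ((N : ℝ≥0∞) ^ q * (Z₀ * ∏ k, (Htot k) ^ (p k)⁻¹)) := by
        have hprod : ∏ k, ((Htot k) ^ ((p k)⁻¹ * q⁻¹)) ^ q = ∏ k, (Htot k) ^ (p k)⁻¹ :=
          Finset.prod_congr rfl fun k _ => by
            rw [← ENNReal.rpow_mul, mul_assoc, inv_mul_cancel₀ hq0.ne', mul_one]
        rw [ENNReal.mul_rpow_of_nonneg _ _ hq0.le, ENNReal.mul_rpow_of_nonneg _ _ hq0.le,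
          ← ENNReal.rpow_mul Z₀, inv_mul_cancel₀ hq0.ne', ENNReal.rpow_one,
          ← ENNReal.prod_rpow_of_nonneg hq0.le, hprod]
    _ ≤ ENNReal.ofReal (((N:ℝ) + 1) ^ (m:ℕ)) * (ENNReal.ofReal (κ ^ (m:ℕ)) *
          ENNReal.ofReal C₀ * ∏ k, (Htot k) ^ (p k)⁻¹) := by
        have hN : (N : ℝ≥0∞) ^ q ≤ ENNReal.ofReal (((N:ℝ) + 1) ^ (m:ℕ)) := by
          have h1 : (N : ℝ≥0∞) ^ q ≤ ((N:ℝ≥0∞) + 1) ^ q :=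
            ENNReal.rpow_le_rpow (le_self_add) hq0.le
          have h2 : ((N:ℝ≥0∞) + 1) ^ q ≤ ((N:ℝ≥0∞) + 1) ^ ((m:ℕ):ℝ) :=
            ENNReal.rpow_le_rpow_of_exponent_le le_add_self hqm
          refine h1.trans (h2.trans (le_of_eq ?_))
          rw [ENNReal.rpow_natCast, ENNReal.ofReal_pow (by positivity)]
          congr 1
          rw [ENNReal.ofReal_add (by positivity) zero_le_one, ENNReal.ofReal_natCast,
            ENNReal.ofReal_one]
        calc ENNReal.ofReal t * ((N : ℝ≥0∞) ^ q * (Z₀ * ∏ k, (Htot k) ^ (p k)⁻¹))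
            = (N : ℝ≥0∞) ^ q * (ENNReal.ofReal (κ ^ (m:ℕ)) * ENNReal.ofReal C₀ *
              (ENNReal.ofReal t * (ENNReal.ofReal t)⁻¹) * ∏ k, (Htot k) ^ (p k)⁻¹) := by
              rw [hZ₀]; ring
          _ = (N : ℝ≥0∞) ^ q * (ENNReal.ofReal (κ ^ (m:ℕ)) * ENNReal.ofReal C₀ *
              ∏ k, (Htot k) ^ (p k)⁻¹) := by
              rw [ENNReal.mul_inv_cancel ht0 ENNReal.ofReal_ne_top, mul_one]
          _ ≤ ENNReal.ofReal (((N:ℝ) + 1) ^ (m:ℕ)) * (ENNReal.ofReal (κ ^ (m:ℕ)) *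
              ENNReal.ofReal C₀ * ∏ k, (Htot k) ^ (p k)⁻¹) := mul_le_mul_left hN _
    _ = ENNReal.ofReal (((N:ℝ) + 1) ^ (m:ℕ) * (κ ^ (m:ℕ) * C₀)) *
          ∏ j, wLp (p j) (w j) (f j) := by
        rw [ENNReal.ofReal_mul (by positivity), ENNReal.ofReal_mul (by positivity)]
        have hwlp : ∏ j, wLp (p j) (w j) (f j) = ∏ k, (Htot k) ^ (p k)⁻¹ :=
          Finset.prod_congr rfl fun j _ => by rw [wLp, one_div]
        rw [hwlp]
        ring


end
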